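/- Let U be a set of functions from ℝ^n to ℝ that is closed under pointwise binary minimum and pointwise binary maximum. If some path-complete labeled graph G_1 = (S_1,E_1) with length-1 labels is feasible for a family (V_s)_{s∈S_1} with V_s ∈ U for every s, then there exists a common Lyapunov function V ∈ U for the switching system; consequently, for every labeled graph G_2 = (S_2,E_2) over the same label set, G_2 is feasible for a family of pieces all belonging to U (namely the constant family W_s = V), so G_1 ≤_U G_2. -/

import Mathlib

/-- A directed path in a labeled graph `(S, E)` from a node to a node, carrying
the word read along the path as its label. -/
inductive HasPath {S L : Type*} (E : Set (S × S × L)) : S → S → List L → Prop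
  | nil (s : S) : HasPath E s s []
  | cons {s t d : S} {σ : L} {w : List L} :
      (s, t, σ) ∈ E → HasPath E t d w → HasPath E s d (σ :: w)

/-- A labeled graph is path-complete if every finite word is contained (as a
contiguous subword) in the label of some directed path of the graph. -/
def PathComplete {S L : Type*} (E : Set (S × S × L)) : Prop :=
  ∀ w : List L, ∃ (s d : S) (w₁ w₂ : List L), HasPath E s d (w₁ ++ w ++ w₂)


section Aux

open Classical in
/-- successor set of a subset of nodes under one label -/
noncomputable def succSet {S L : Type*} [Fintype S] (E : Set (S × S × L)) (σ : L)
    (T : Finset S) : Finset S :=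
  Finset.univ.filter (fun q => ∃ p ∈ T, (p, q, σ) ∈ E)

lemma mem_succSet {S L : Type*} [Fintype S] {E : Set (S × S × L)} {σ : L}
    {T : Finset S} {q : S} : q ∈ succSet E σ T ↔ ∃ p ∈ T, (p, q, σ) ∈ E := by
  simp [succSet]

noncomputable def succList {S L : Type*} [Fintype S] (E : Set (S × S × L)) :
    List L → Finset S → Finset S
  | [], T => T
  | σ :: w, T => succList E w (succSet E σ T)

lemma succList_append_singleton {S L : Type*} [Fintype S] (E : Set (S × S × L))
    (w : List L) (σ : L) (T : Finset S) :
    succList E (w ++ [σ]) T = succSet E σ (succList E w T) := by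
  induction w generalizing T with
  | nil => rfl
  | cons a w ih => simp [succList, ih]

lemma hasPath_mem_succList {S L : Type*} [Fintype S] {E : Set (S × S × L)}
    {s d : S} {w : List L} (h : HasPath E s d w) :
    ∀ T : Finset S, s ∈ T → d ∈ succList E w T := by
  induction h with
  | nil => intro T hs; exact hs
  | cons he _ ih =>
      intro T hs
      exact ih _ (mem_succSet.mpr ⟨_, hs, he⟩)

lemma hasPath_append_split {S L : Type*} {E : Set (S × S × L)} {s d : S}
    {u v : List L} (h : HasPath E s d (u ++ v)) :
    ∃ m, HasPath E s m u ∧ HasPath E m d v := by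
  induction u generalizing s with
  | nil => exact ⟨s, HasPath.nil s, h⟩
  | cons σ u ih =>
      cases h with
      | cons he h' =>
          obtain ⟨m, h1, h2⟩ := ih h'
          exact ⟨m, HasPath.cons he h1, h2⟩

lemma sup'_mem {n : ℕ} (U : Set ((Fin n → ℝ) → ℝ))
    (hmax : ∀ u ∈ U, ∀ v ∈ U, (fun x => max (u x) (v x)) ∈ U)
    {ι : Type*} (T : Finset ι) (hT : T.Nonempty) (g : ι → (Fin n → ℝ) → ℝ)
    (hg : ∀ s ∈ T, g s ∈ U) :
    (fun x => T.sup' hT fun s => g s x) ∈ U := by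
  induction hT using Finset.Nonempty.cons_induction with
  | singleton a => simpa using hg a (by simp)
  | cons a s h hs ih =>
      have h1 : (fun x => (Finset.cons a s h).sup' (Finset.cons_nonempty h) fun t => g t x)
          = fun x => max (g a x) (s.sup' hs fun t => g t x) := by
        funext x; rw [Finset.sup'_cons]
      rw [h1]
      exact hmax _ (hg a (by simp)) _ (ih fun t ht => hg t (by simp [ht]))

lemma inf'_mem {n : ℕ} (U : Set ((Fin n → ℝ) → ℝ))
    (hmin : ∀ u ∈ U, ∀ v ∈ U, (fun x => min (u x) (v x)) ∈ U)
    {ι : Type*} (T : Finset ι) (hT : T.Nonempty) (g : ι → (Fin n → ℝ) → ℝ)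
    (hg : ∀ s ∈ T, g s ∈ U) :
    (fun x => T.inf' hT fun s => g s x) ∈ U := by
  induction hT using Finset.Nonempty.cons_induction with
  | singleton a => simpa using hg a (by simp)
  | cons a s h hs ih =>
      have h1 : (fun x => (Finset.cons a s h).inf' (Finset.cons_nonempty h) fun t => g t x)
          = fun x => min (g a x) (s.inf' hs fun t => g t x) := by
        funext x; rw [Finset.inf'_cons]
      rw [h1]
      exact hmin _ (hg a (by simp)) _ (ih fun t ht => hg t (by simp [ht]))

end Aux

/-- Remark 4.1 of the paper. Let `U` be a template of
functions closed under pointwise binary minimum and maximum. If some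
path-complete graph `G₁` with length-1 labels is feasible for pieces all drawn
from `U`, then the system admits a common Lyapunov function `W ∈ U`;
consequently every labeled graph `G₂` over the same label set is feasible for a
family of pieces all belonging to `U` (the constant family equal to `W`), i.e.
`G₁ ≤_U G₂`. -/
theorem stmt_15 {n M : ℕ} (hn : 1 ≤ n) (hM : 1 ≤ M)
    (f : Fin M → (Fin n → ℝ) → (Fin n → ℝ))
    (U : Set ((Fin n → ℝ) → ℝ))
    (hmin : ∀ u ∈ U, ∀ v ∈ U, (fun x => min (u x) (v x)) ∈ U)
    (hmax : ∀ u ∈ U, ∀ v ∈ U, (fun x => max (u x) (v x)) ∈ U)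
    {S₁ : Type*} [Fintype S₁] [Nonempty S₁]
    (E₁ : Set (S₁ × S₁ × Fin M)) (hpc : PathComplete E₁)
    (V : S₁ → (Fin n → ℝ) → ℝ) (hVU : ∀ s, V s ∈ U)
    (hfeas : ∀ p q σ, (p, q, σ) ∈ E₁ → ∀ x : Fin n → ℝ, V q (f σ x) ≤ V p x) :
    ∃ W ∈ U, (∀ (σ : Fin M) (x : Fin n → ℝ), W (f σ x) ≤ W x) ∧
      ∀ (S₂ : Type) (E₂ : Set (S₂ × S₂ × Fin M)),
        ∃ W₂ : S₂ → (Fin n → ℝ) → ℝ, (∀ s, W₂ s ∈ U) ∧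
          ∀ p q σ, (p, q, σ) ∈ E₂ →
            ∀ x : Fin n → ℝ, W₂ q (f σ x) ≤ W₂ p x := by
  classical
  set F : Finset (Finset S₁) :=
    Finset.univ.filter (fun T => ∃ w : List (Fin M), succList E₁ w Finset.univ = T) with hF
  have hmemF : ∀ w : List (Fin M), succList E₁ w Finset.univ ∈ F := fun w =>
    Finset.mem_filter.mpr ⟨Finset.mem_univ _, ⟨w, rfl⟩⟩
  have hne : ∀ T ∈ F, T.Nonempty := by
    intro T hT
    obtain ⟨w, rfl⟩ := (Finset.mem_filter.mp hT).2
    obtain ⟨s, d, w₁, w₂, hp⟩ := hpc w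
    rw [List.append_assoc] at hp
    obtain ⟨m, _, hp2⟩ := hasPath_append_split hp
    obtain ⟨m', hpw, _⟩ := hasPath_append_split hp2
    exact ⟨m', hasPath_mem_succList hpw Finset.univ (Finset.mem_univ _)⟩
  have hFne : F.Nonempty := ⟨_, hmemF []⟩
  have hFa : F.attach.Nonempty := Finset.attach_nonempty_iff.mpr hFne
  set W : (Fin n → ℝ) → ℝ :=
    fun x => F.attach.inf' hFa (fun T => T.1.sup' (hne T.1 T.2) fun s => V s x) with hW
  have hWU : W ∈ U :=
    inf'_mem U hmin F.attach hFa _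
      (fun T _ => sup'_mem U hmax T.1 (hne T.1 T.2) V (fun s _ => hVU s))
  have hlyap : ∀ (σ : Fin M) (x : Fin n → ℝ), W (f σ x) ≤ W x := by
    intro σ x
    rw [hW]
    apply Finset.le_inf'
    intro T hT
    have hmem : succSet E₁ σ T.1 ∈ F := by
      obtain ⟨w, hw⟩ := (Finset.mem_filter.mp T.2).2
      have h2 := hmemF (w ++ [σ])
      rwa [succList_append_singleton, hw] at h2
    calc W (f σ x) ≤ (succSet E₁ σ T.1).sup' (hne _ hmem) (fun q => V q (f σ x)) :=
          Finset.inf'_le _ (Finset.mem_attach _ ⟨_, hmem⟩)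
      _ ≤ T.1.sup' (hne T.1 T.2) (fun s => V s x) := by
          apply Finset.sup'_le
          intro q hq
          obtain ⟨p, hp, he⟩ := mem_succSet.mp hq
          exact le_trans (hfeas p q σ he x) (Finset.le_sup' (fun s => V s x) hp)
  exact ⟨W, hWU, hlyap, fun S₂ E₂ =>
    ⟨fun _ => W, fun _ => hWU, fun p q σ _ x => hlyap σ x⟩⟩
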